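/- Let h be a positive integer, let d and U_1, ..., U_h be nonnegative real numbers, and let R be a natural number with R ≤ h such that ∑_{j=1}^R U_j ≤ d. Suppose that real numbers x_1, ..., x_h satisfy 0 ≤ x_j ≤ U_j for every j and ∑_{j=1}^h x_j = d. Then ∑_{j=1}^h j·x_j ≥ ∑_{j=1}^R j·U_j. -/
import Mathlib


/-- Lemma 3.1 of the paper: a combinatorial inequality. -/
theorem stmt_0 (h : ℕ) (hh : 0 < h) (d : ℝ) (U x : ℕ → ℝ) (R : ℕ)
    (hd : 0 ≤ d) (hU : ∀ j ∈ Finset.Icc 1 h, 0 ≤ U j)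
    (hR : R ≤ h) (hRU : ∑ j ∈ Finset.Icc 1 R, U j ≤ d)
    (hx0 : ∀ j ∈ Finset.Icc 1 h, 0 ≤ x j)
    (hxU : ∀ j ∈ Finset.Icc 1 h, x j ≤ U j)
    (hxd : ∑ j ∈ Finset.Icc 1 h, x j = d) :
    ∑ j ∈ Finset.Icc 1 h, (j : ℝ) * x j ≥ ∑ j ∈ Finset.Icc 1 R, (j : ℝ) * U j := by
  have e : ∀ n : ℕ, Finset.Icc 1 n = Finset.Ioc 0 n := fun n => Finset.Icc_add_one_left_eq_Ioc 0 n
  simp only [e] at *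
  have hsplit : ∀ f : ℕ → ℝ,
      ∑ j ∈ Finset.Ioc 0 R, f j + ∑ j ∈ Finset.Ioc R h, f j = ∑ j ∈ Finset.Ioc 0 h, f j :=
    fun f => Finset.sum_Ioc_consecutive f (Nat.zero_le R) hR
  have hsub : ∀ j ∈ Finset.Ioc 0 R, j ∈ Finset.Ioc 0 h := by
    intro j hj
    simp only [Finset.mem_Ioc] at *
    exact ⟨hj.1, hj.2.trans hR⟩
  have hsub2 : ∀ j ∈ Finset.Ioc R h, j ∈ Finset.Ioc 0 h := by
    intro j hj
    simp only [Finset.mem_Ioc] at *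
    exact ⟨Nat.lt_of_le_of_lt (Nat.zero_le R) hj.1, hj.2⟩
  -- lower bound on the low part
  have h1 : ∑ j ∈ Finset.Ioc 0 R, (j : ℝ) * x j ≥
      ∑ j ∈ Finset.Ioc 0 R, ((j : ℝ) * U j + (R : ℝ) * (x j - U j)) := by
    apply Finset.sum_le_sum
    intro j hj
    have hjR : (j : ℝ) ≤ R := by exact_mod_cast (Finset.mem_Ioc.mp hj).2
    have hxu : x j - U j ≤ 0 := sub_nonpos.mpr (hxU j (hsub j hj))
    nlinarith [mul_nonneg (sub_nonneg.mpr hjR) (neg_nonneg.mpr hxu)]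
  -- lower bound on the high part
  have h2 : ∑ j ∈ Finset.Ioc R h, (j : ℝ) * x j ≥
      ∑ j ∈ Finset.Ioc R h, (R : ℝ) * x j := by
    apply Finset.sum_le_sum
    intro j hj
    have hjR : (R : ℝ) ≤ j := by exact_mod_cast le_of_lt (Finset.mem_Ioc.mp hj).1
    exact mul_le_mul_of_nonneg_right hjR (hx0 j (hsub2 j hj))
  have key := hsplit (fun j => (j : ℝ) * x j)
  have hxsplit := hsplit (fun j => x j)
  have h3 : ∑ j ∈ Finset.Ioc 0 R, ((j : ℝ) * U j + (R : ℝ) * (x j - U j)) =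
      ∑ j ∈ Finset.Ioc 0 R, (j : ℝ) * U j + (R : ℝ) * (∑ j ∈ Finset.Ioc 0 R, x j
        - ∑ j ∈ Finset.Ioc 0 R, U j) := by
    rw [Finset.sum_add_distrib, ← Finset.mul_sum, Finset.sum_sub_distrib]
  have h4 : ∑ j ∈ Finset.Ioc R h, (R : ℝ) * x j =
      (R : ℝ) * ∑ j ∈ Finset.Ioc R h, x j := by rw [Finset.mul_sum]
  have hRnn : (0 : ℝ) ≤ R := Nat.cast_nonneg R
  nlinarith [mul_le_mul_of_nonneg_left hRU hRnn]
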